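/- Let γ : ℝ → ℝ² be a continuously differentiable 2π-periodic curve and σ : ℝ → ℝ a continuous 2π-periodic density, and let 0 < δ₁ < δ₂. Then for every x ∈ ℝ², the near-history single layer heat potential satisfies ∫_{δ₁}^{δ₂} ∫_0^{2π} exp(-‖x-γ(θ)‖²/(4t))/(4πt) · σ(θ)·‖γ'(θ)‖ dθ dt = (2π)^{-2} ∫_{ℝ²} ((exp(-‖k‖²δ₁) - exp(-‖k‖²δ₂))/‖k‖²) · exp(i k·x) · σ̂(k) dk, where σ̂(k) = ∫_0^{2π} exp(-i k·γ(θ)) σ(θ) ‖γ'(θ)‖ dθ. -/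

import Mathlib

open MeasureTheory

/-- Fourier representation of the near-history single layer heat potential for a
closed C¹ curve `γ` (2π-periodic) with continuous 2π-periodic density `σ`. -/
theorem near_history_single_layer_fourier_rep
    (γ : ℝ → EuclideanSpace ℝ (Fin 2)) (hγ : ContDiff ℝ 1 γ)
    (hγper : Function.Periodic γ (2 * Real.pi))
    (σ : ℝ → ℝ) (hσ : Continuous σ) (hσper : Function.Periodic σ (2 * Real.pi))
    (δ₁ δ₂ : ℝ) (hδ₁ : 0 < δ₁) (hδ₁₂ : δ₁ < δ₂) (x : EuclideanSpace ℝ (Fin 2)) :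
    ((∫ t in δ₁..δ₂, ∫ θ in (0:ℝ)..(2 * Real.pi),
        Real.exp (-‖x - γ θ‖ ^ 2 / (4 * t)) / (4 * Real.pi * t) * (σ θ * ‖deriv γ θ‖) : ℝ) : ℂ)
      = ((1 / (2 * Real.pi) ^ 2 : ℝ) : ℂ) *
        ∫ k : EuclideanSpace ℝ (Fin 2),
          (((Real.exp (-‖k‖ ^ 2 * δ₁) - Real.exp (-‖k‖ ^ 2 * δ₂)) / ‖k‖ ^ 2 : ℝ) : ℂ) *
          Complex.exp (Complex.I * ((inner ℝ k x : ℝ) : ℂ)) *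
          ∫ θ in (0:ℝ)..(2 * Real.pi),
            Complex.exp (-(Complex.I * ((inner ℝ k (γ θ) : ℝ) : ℂ))) *
            ((σ θ * ‖deriv γ θ‖ : ℝ) : ℂ) := by
  have pi_pos := Real.pi_pos
  have h2pi : (0:ℝ) ≤ 2 * Real.pi := by positivity
  have hδle : δ₁ ≤ δ₂ := hδ₁₂.le
  set a : ℝ → ℝ := fun θ => σ θ * ‖deriv γ θ‖ with ha_def
  have ha_cont : Continuous a := hσ.mul (hγ.continuous_deriv le_rfl).norm
  set μ : Measure (EuclideanSpace ℝ (Fin 2)) := volume with hμ_def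
  set ν₁ : Measure ℝ := volume.restrict (Set.Ioc 0 (2 * Real.pi)) with hν₁_def
  set ν₂ : Measure ℝ := volume.restrict (Set.Ioc δ₁ δ₂) with hν₂_def
  set h : EuclideanSpace ℝ (Fin 2) → ℝ → ℝ → ℂ := fun k θ t =>
    Complex.exp (-(t:ℂ) * (‖k‖:ℝ)^2 + Complex.I * ((inner ℝ (x - γ θ) k : ℝ) : ℂ))
      * ((a θ : ℝ) : ℂ) with hh_def
  -- continuity of the full integrand
  have hγc : Continuous γ := hγ.continuous
  have hcd : Continuous (deriv γ) := hγ.continuous_deriv le_rfl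
  have Hcont : Continuous (fun p : EuclideanSpace ℝ (Fin 2) × ℝ × ℝ => h p.1 p.2.1 p.2.2) := by
    apply Continuous.mul
    · apply Complex.continuous_exp.comp
      apply Continuous.add
      · fun_prop
      · apply Continuous.mul continuous_const
        apply Complex.continuous_ofReal.comp
        exact Continuous.inner (by fun_prop) (by fun_prop)
    · fun_prop
  -- a bound for a on the relevant interval
  obtain ⟨C, hC⟩ := (isCompact_Icc (a := (0:ℝ)) (b := 2 * Real.pi)).exists_bound_of_continuousOn
    ha_cont.continuousOn
  -- norm of h
  have hnorm : ∀ k θ t, ‖h k θ t‖ = Real.exp (-t * ‖k‖^2) * |a θ| := by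
    intro k θ t
    rw [hh_def]
    simp [Complex.norm_exp, Complex.add_re, Complex.mul_re, ← Complex.ofReal_pow]
  -- integrability on the triple product
  have HI : Integrable (fun p : EuclideanSpace ℝ (Fin 2) × ℝ × ℝ => h p.1 p.2.1 p.2.2)
      (μ.prod (ν₁.prod ν₂)) := by
    have hg1 : Integrable (fun k : EuclideanSpace ℝ (Fin 2) => Real.exp (-δ₁ * ‖k‖^2)) μ := by
      have := (GaussianFourier.integrable_cexp_neg_mul_sq_norm_add
        (V := EuclideanSpace ℝ (Fin 2)) (b := (δ₁:ℂ)) (by simpa using hδ₁) 0 0).norm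
      refine this.congr ?_
      filter_upwards with v
      simp [Complex.norm_exp, Complex.add_re, Complex.mul_re, ← Complex.ofReal_pow]
    have hgC : Integrable (fun q : ℝ × ℝ => C) (ν₁.prod ν₂) := integrable_const _
    have hg : Integrable (fun p : EuclideanSpace ℝ (Fin 2) × ℝ × ℝ =>
        Real.exp (-δ₁ * ‖p.1‖^2) * C) (μ.prod (ν₁.prod ν₂)) := hg1.mul_prod hgC
    refine hg.mono' Hcont.aestronglyMeasurable ?_
    have hmeas : MeasurableSet ((Set.univ : Set (EuclideanSpace ℝ (Fin 2))) ×ˢ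
        (Set.Ioc 0 (2 * Real.pi) ×ˢ Set.Ioc δ₁ δ₂)) :=
      MeasurableSet.univ.prod (measurableSet_Ioc.prod measurableSet_Ioc)
    have hprod : μ.prod (ν₁.prod ν₂) = ((volume : Measure (EuclideanSpace ℝ (Fin 2))).prod
        ((volume : Measure ℝ).prod (volume : Measure ℝ))).restrict
        ((Set.univ : Set (EuclideanSpace ℝ (Fin 2))) ×ˢ
          (Set.Ioc 0 (2 * Real.pi) ×ˢ Set.Ioc δ₁ δ₂)) := by
      rw [hμ_def, hν₁_def, hν₂_def, ← Measure.prod_restrict, ← Measure.prod_restrict,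
        Measure.restrict_univ]
    rw [hprod]
    filter_upwards [ae_restrict_mem hmeas] with p hp
    obtain ⟨-, hθ, ht⟩ := hp
    rw [hnorm]
    have h1 : Real.exp (-p.2.2 * ‖p.1‖^2) ≤ Real.exp (-δ₁ * ‖p.1‖^2) := by
      apply Real.exp_le_exp.2
      have : δ₁ ≤ p.2.2 := ht.1.le
      nlinarith [sq_nonneg ‖p.1‖]
    have h2 : |a p.2.1| ≤ C := hC _ (Set.mem_Icc.2 ⟨hθ.1.le, hθ.2⟩)
    exact mul_le_mul h1 h2 (abs_nonneg _) (Real.exp_nonneg _)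
  -- Gaussian identity
  have hGauss : ∀ (θ t : ℝ), 0 < t →
      ((Real.exp (-‖x - γ θ‖ ^ 2 / (4 * t)) / (4 * Real.pi * t) * a θ : ℝ) : ℂ)
        = ((1 / (2 * Real.pi) ^ 2 : ℝ) : ℂ) * ∫ k, h k θ t ∂μ := by
    intro θ t ht
    have hint : (∫ k, Complex.exp (-(t:ℂ) * (‖k‖:ℝ)^2
        + Complex.I * ((inner ℝ (x - γ θ) k : ℝ) : ℂ)) ∂μ)
        = ((Real.pi / t : ℝ) : ℂ) * Complex.exp (((-‖x - γ θ‖^2 / (4*t) : ℝ)) : ℂ) := by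
      have := GaussianFourier.integral_cexp_neg_mul_sq_norm_add
        (V := EuclideanSpace ℝ (Fin 2)) (b := (t:ℂ)) (by simpa using ht) Complex.I (x - γ θ)
      rw [hμ_def, this]
      have h2 : (Module.finrank ℝ (EuclideanSpace ℝ (Fin 2)) : ℂ) / 2 = 1 := by
        simp [finrank_euclideanSpace_fin]
      rw [h2, Complex.cpow_one]
      push_cast
      rw [Complex.I_sq]
      ring_nf
    have hsplit : (∫ k, h k θ t ∂μ)
        = (((Real.pi / t : ℝ) : ℂ) * Complex.exp (((-‖x - γ θ‖^2 / (4*t) : ℝ)) : ℂ))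
          * ((a θ : ℝ) : ℂ) := by
      rw [hh_def, ← hint]
      exact integral_mul_const _ _
    rw [hsplit, ← Complex.ofReal_exp]
    push_cast
    have hπ : (Real.pi : ℂ) ≠ 0 := by exact_mod_cast pi_pos.ne'
    have htne : (t : ℂ) ≠ 0 := by exact_mod_cast ht.ne'
    field_simp
    ring
  -- Fubini chain
  have hG : Integrable (fun q : ℝ × ℝ => ∫ k, h k q.1 q.2 ∂μ) (ν₁.prod ν₂) :=
    HI.swap.integral_prod_left
  have hT1 : ∫ k, ∫ θ, ∫ t, h k θ t ∂ν₂ ∂ν₁ ∂μ = ∫ t, ∫ θ, ∫ k, h k θ t ∂μ ∂ν₁ ∂ν₂ := by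
    calc ∫ k, ∫ θ, ∫ t, h k θ t ∂ν₂ ∂ν₁ ∂μ
        = ∫ k, ∫ q, h k q.1 q.2 ∂(ν₁.prod ν₂) ∂μ := by
          refine integral_congr_ae ?_
          filter_upwards [HI.prod_right_ae] with k hk
          rw [integral_prod _ hk]
      _ = ∫ q, ∫ k, h k q.1 q.2 ∂μ ∂(ν₁.prod ν₂) := integral_integral_swap HI
      _ = ∫ θ, ∫ t, ∫ k, h k θ t ∂μ ∂ν₂ ∂ν₁ := integral_prod _ hG
      _ = ∫ t, ∫ θ, ∫ k, h k θ t ∂μ ∂ν₁ ∂ν₂ := integral_integral_swap hG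
  -- LHS
  have inner_eq : ∀ t : ℝ, 0 < t →
      (((∫ θ in (0:ℝ)..(2 * Real.pi),
          Real.exp (-‖x - γ θ‖ ^ 2 / (4 * t)) / (4 * Real.pi * t) * (σ θ * ‖deriv γ θ‖)) : ℝ) : ℂ)
        = ((1 / (2 * Real.pi) ^ 2 : ℝ) : ℂ) * ∫ θ, ∫ k, h k θ t ∂μ ∂ν₁ := by
    intro t ht
    rw [hν₁_def, ← intervalIntegral.integral_ofReal, intervalIntegral.integral_of_le h2pi,
      ← integral_const_mul]
    exact integral_congr_ae (Filter.Eventually.of_forall fun θ => hGauss θ t ht)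
  have hL : ((∫ t in δ₁..δ₂, ∫ θ in (0:ℝ)..(2 * Real.pi),
        Real.exp (-‖x - γ θ‖ ^ 2 / (4 * t)) / (4 * Real.pi * t) * (σ θ * ‖deriv γ θ‖) : ℝ) : ℂ)
      = ((1 / (2 * Real.pi) ^ 2 : ℝ) : ℂ) * ∫ t, ∫ θ, ∫ k, h k θ t ∂μ ∂ν₁ ∂ν₂ := by
    rw [hν₂_def, ← intervalIntegral.integral_ofReal, intervalIntegral.integral_of_le hδle,
      ← integral_const_mul]
    refine setIntegral_congr_fun measurableSet_Ioc fun t ht => ?_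
    exact inner_eq t (hδ₁.trans ht.1)
  -- RHS
  have hzero : ∀ᵐ k ∂μ, k ≠ (0 : EuclideanSpace ℝ (Fin 2)) := by
    rw [hμ_def]
    refine (ae_iff).2 ?_
    simpa using measure_singleton (0 : EuclideanSpace ℝ (Fin 2))
  have hR : (∫ k : EuclideanSpace ℝ (Fin 2),
        (((Real.exp (-‖k‖ ^ 2 * δ₁) - Real.exp (-‖k‖ ^ 2 * δ₂)) / ‖k‖ ^ 2 : ℝ) : ℂ) *
        Complex.exp (Complex.I * ((inner ℝ k x : ℝ) : ℂ)) *
        (∫ θ in (0:ℝ)..(2 * Real.pi),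
          Complex.exp (-(Complex.I * ((inner ℝ k (γ θ) : ℝ) : ℂ))) *
          ((σ θ * ‖deriv γ θ‖ : ℝ) : ℂ)) ∂μ)
      = ∫ k, ∫ θ, ∫ t, h k θ t ∂ν₂ ∂ν₁ ∂μ := by
    refine integral_congr_ae ?_
    filter_upwards [hzero] with k hk
    have hknorm : ‖k‖ ≠ 0 := norm_ne_zero_iff.2 hk
    have hc : (-((‖k‖:ℝ):ℂ)^2) ≠ 0 := by simp [hknorm]
    have ht_int : ∀ θ : ℝ, (∫ t, h k θ t ∂ν₂)
        = (((Real.exp (-‖k‖^2*δ₁) - Real.exp (-‖k‖^2*δ₂)) / ‖k‖^2 : ℝ) : ℂ)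
          * (Complex.exp (Complex.I * ((inner ℝ (x - γ θ) k : ℝ) : ℂ)) * ((a θ : ℝ) : ℂ)) := by
      intro θ
      have hform : ∀ t : ℝ, h k θ t = Complex.exp ((-((‖k‖:ℝ):ℂ)^2) * (t:ℂ))
          * (Complex.exp (Complex.I * ((inner ℝ (x - γ θ) k : ℝ) : ℂ)) * ((a θ : ℝ) : ℂ)) := by
        intro t
        simp only [hh_def]
        rw [show (-(t:ℂ) * ((‖k‖:ℝ):ℂ)^2 + Complex.I * ((inner ℝ (x - γ θ) k : ℝ) : ℂ)) =
            ((-((‖k‖:ℝ):ℂ)^2) * (t:ℂ)) + Complex.I * ((inner ℝ (x - γ θ) k : ℝ) : ℂ) by ring,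
          Complex.exp_add, mul_assoc]
      calc (∫ t, h k θ t ∂ν₂)
          = ∫ t in δ₁..δ₂, Complex.exp ((-((‖k‖:ℝ):ℂ)^2) * (t:ℂ))
              * (Complex.exp (Complex.I * ((inner ℝ (x - γ θ) k : ℝ) : ℂ)) * ((a θ : ℝ) : ℂ)) := by
            rw [hν₂_def, ← intervalIntegral.integral_of_le hδle]
            exact intervalIntegral.integral_congr fun t _ => hform t
        _ = (∫ t in δ₁..δ₂, Complex.exp ((-((‖k‖:ℝ):ℂ)^2) * (t:ℂ)))
              * (Complex.exp (Complex.I * ((inner ℝ (x - γ θ) k : ℝ) : ℂ)) * ((a θ : ℝ) : ℂ)) :=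
            intervalIntegral.integral_mul_const _ _
        _ = _ := by
            rw [integral_exp_mul_complex hc]
            congr 1
            push_cast
            rw [div_neg, ← neg_div, neg_sub]
    calc (((Real.exp (-‖k‖ ^ 2 * δ₁) - Real.exp (-‖k‖ ^ 2 * δ₂)) / ‖k‖ ^ 2 : ℝ) : ℂ) *
        Complex.exp (Complex.I * ((inner ℝ k x : ℝ) : ℂ)) *
        ∫ θ in (0:ℝ)..(2 * Real.pi),
          Complex.exp (-(Complex.I * ((inner ℝ k (γ θ) : ℝ) : ℂ))) *
          ((σ θ * ‖deriv γ θ‖ : ℝ) : ℂ)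
        = ∫ θ, (((Real.exp (-‖k‖ ^ 2 * δ₁) - Real.exp (-‖k‖ ^ 2 * δ₂)) / ‖k‖ ^ 2 : ℝ) : ℂ) *
            Complex.exp (Complex.I * ((inner ℝ k x : ℝ) : ℂ)) *
            (Complex.exp (-(Complex.I * ((inner ℝ k (γ θ) : ℝ) : ℂ))) *
            ((σ θ * ‖deriv γ θ‖ : ℝ) : ℂ)) ∂ν₁ := by
          rw [hν₁_def, intervalIntegral.integral_of_le h2pi, mul_assoc, ← integral_const_mul,
            ← integral_const_mul]
          simp only [mul_assoc]
      _ = ∫ θ, ∫ t, h k θ t ∂ν₂ ∂ν₁ := by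
          refine integral_congr_ae (Filter.Eventually.of_forall fun θ => ?_)
          dsimp only
          rw [ht_int θ]
          have hinner : Complex.I * ((inner ℝ (x - γ θ) k : ℝ) : ℂ)
              = Complex.I * ((inner ℝ k x : ℝ) : ℂ) + -(Complex.I * ((inner ℝ k (γ θ) : ℝ) : ℂ)) := by
            have : (inner ℝ (x - γ θ) k : ℝ) = (inner ℝ k x : ℝ) - (inner ℝ k (γ θ) : ℝ) := by
              rw [inner_sub_left, real_inner_comm x k, real_inner_comm (γ θ) k]
            rw [this]
            push_cast
            ring
          rw [hinner, Complex.exp_add]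
          ring_nf
          rfl
  rw [hL, hR, hT1]
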